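/- Let X be a locally complete ordered set with a bottom element and f : (A, α) → (B, β) a morphism in Ord//X. If f : A → B is an effective descent morphism in Ord and, for every x ∈ X, the restriction f_x : A_x → B_x of f (where A_x = {a ∈ A : x ≤ α(a)} and B_x = {b ∈ B : x ≤ β(b)}) is a descent morphism in Ord, then f is an effective descent morphism in Ord//X. -/

import Mathlib

open CategoryTheory Limits

universe u
universe u₁ v₁ u₂ v₂

attribute [local instance] CategoryTheory.ConcreteCategory.instFunLike

namespace Desc

/-! ### Order-theoretic notions for preorders ("ordered sets") -/

/-- `x ≅ y`: equivalence in a preorder. -/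
def EquivLE {X : Type u} [Preorder X] (x y : X) : Prop := x ≤ y ∧ y ≤ x

/-- `m` is a binary meet (greatest lower bound) of `y` and `z`. -/
def IsMeet {X : Type u} [Preorder X] (y z m : X) : Prop :=
  m ≤ y ∧ m ≤ z ∧ ∀ u, u ≤ y → u ≤ z → u ≤ m

/-- `j` is a join (least upper bound) of the subset `S` computed in the down-set `↓x`. -/
def IsLocalJoin {X : Type u} [Preorder X] (x : X) (S : Set X) (j : X) : Prop :=
  j ≤ x ∧ (∀ s ∈ S, s ≤ j) ∧ ∀ u, u ≤ x → (∀ s ∈ S, s ≤ u) → j ≤ u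

/-- `X` is locally complete: every subset of a down-set `↓x` has a join in `↓x`. -/
def LocallyComplete (X : Type u) [Preorder X] : Prop :=
  ∀ x : X, ∀ S : Set X, (∀ s ∈ S, s ≤ x) → ∃ j, IsLocalJoin x S j

/-- `X` is complete: every subset has a join (least upper bound). -/
def CompleteOrd (X : Type u) [Preorder X] : Prop :=
  ∀ S : Set X, ∃ j, IsLUB S j

/-- `X` locally has binary meets: each down-set `↓x` has binary meets
(these are automatically meets in `X` of the pair). -/
def LocallyBinaryMeets (X : Type u) [Preorder X] : Prop :=
  ∀ x y z : X, y ≤ x → z ≤ x → ∃ m, IsMeet y z m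

/-- `X` is locally cartesian closed: each down-set `↓x` has binary meets and
exponentials `z^y` satisfying `w ∧ y ≤ z ↔ w ≤ z^y`. -/
def LocallyCartesianClosed (X : Type u) [Preorder X] : Prop :=
  LocallyBinaryMeets X ∧
    ∀ x y z : X, y ≤ x → z ≤ x →
      ∃ e, e ≤ x ∧ ∀ w, w ≤ x → ((∃ m, IsMeet w y m ∧ m ≤ z) ↔ w ≤ e)

theorem LocallyComplete.meets {X : Type u} [Preorder X] (h : LocallyComplete X) :
    LocallyBinaryMeets X := by
  intro x y z hy hz
  obtain ⟨j, hj⟩ := h x {u | u ≤ y ∧ u ≤ z} (fun s hs => hs.1.trans hy)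
  exact ⟨j, hj.2.2 y hy (fun s hs => hs.1), hj.2.2 z hz (fun s hs => hs.2),
    fun u h1 h2 => hj.2.1 u ⟨h1, h2⟩⟩

theorem CompleteOrd.meets {X : Type u} [Preorder X] (h : CompleteOrd X) :
    LocallyBinaryMeets X := by
  intro _ y z _ _
  obtain ⟨j, hj⟩ := h {u | u ≤ y ∧ u ≤ z}
  exact ⟨j, hj.2 (fun u hu => hu.1), hj.2 (fun u hu => hu.2),
    fun u h1 h2 => hj.1 ⟨h1, h2⟩⟩

/-! ### Descent-theoretic notions -/

/-- A morphism `f : A ⟶ B` in a category with pullbacks is an *effective descent morphism*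
if the comparison functor from `𝒜/B` to the Eilenberg–Moore category of the monad induced on
`𝒜/A` by the adjunction `f_! ⊣ f*` is an equivalence, i.e. `f*` is monadic. -/
def IsEffectiveDescentMorphism {C : Type*} [Category C] [HasPullbacks C]
    {A B : C} (f : A ⟶ B) : Prop :=
  (Monad.comparison (Over.mapPullbackAdj f)).IsEquivalence

/-- A morphism `f : A ⟶ B` in a category with pullbacks is a *descent morphism*
if the comparison functor from `𝒜/B` to the Eilenberg–Moore category of the monad induced on
`𝒜/A` by the adjunction `f_! ⊣ f*` is fully faithful. -/
def IsDescentMorphism {C : Type*} [Category C] [HasPullbacks C]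
    {A B : C} (f : A ⟶ B) : Prop :=
  (Monad.comparison (Over.mapPullbackAdj f)).Full ∧
    (Monad.comparison (Over.mapPullbackAdj f)).Faithful

/-- A morphism `f : A ⟶ B` is a (pullback-)stable regular epimorphism if every pullback of it
(along any `g : Z ⟶ B`) is a regular epimorphism. -/
def IsStableRegularEpi {C : Type*} [Category C] [HasPullbacks C]
    {A B : C} (f : A ⟶ B) : Prop :=
  ∀ ⦃Z : C⦄ (g : Z ⟶ B), Nonempty (RegularEpi (pullback.snd f g))



section PreordPullbacks

instance : HasPullbacks Preord.{u} := by
  have key : ∀ {A B C : Preord.{u}} (f : A ⟶ C) (g : B ⟶ C), HasLimit (cospan f g) := by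
    intro A B C f g
    let P : Preord.{u} := Preord.of {p : A × B // f p.1 = g p.2}
    let fst : P ⟶ A := Preord.ofHom ⟨fun p => p.1.1, fun _ _ h => h.1⟩
    let snd : P ⟶ B := Preord.ofHom ⟨fun p => p.1.2, fun _ _ h => h.2⟩
    have eq : fst ≫ f = snd ≫ g := Preord.ext (fun p => p.2)
    refine HasLimit.mk ⟨_, PullbackCone.IsLimit.mk eq
      (fun s => Preord.ofHom ⟨fun d => ⟨(s.fst d, s.snd d),
        ConcreteCategory.congr_hom s.condition d⟩,
        fun _ _ h => ⟨s.fst.hom.monotone h, s.snd.hom.monotone h⟩⟩)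
      (fun s => rfl) (fun s => rfl) (fun s m h1 h2 => ?_)⟩
    apply Preord.ext
    intro d
    apply Subtype.ext
    exact Prod.ext (ConcreteCategory.congr_hom h1 d)
      (ConcreteCategory.congr_hom h2 d)
  exact @hasPullbacks_of_hasLimit_cospan _ _ (fun {A B C f g} => key f g)

instance : HasPullbacks PartOrd.{u} := by
  have key : ∀ {A B C : PartOrd.{u}} (f : A ⟶ C) (g : B ⟶ C), HasLimit (cospan f g) := by
    intro A B C f g
    let P : PartOrd.{u} := PartOrd.of {p : A × B // f p.1 = g p.2}
    let fst : P ⟶ A := PartOrd.ofHom ⟨fun p => p.1.1, fun _ _ h => h.1⟩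
    let snd : P ⟶ B := PartOrd.ofHom ⟨fun p => p.1.2, fun _ _ h => h.2⟩
    have eq : fst ≫ f = snd ≫ g := PartOrd.ext (fun p => p.2)
    refine HasLimit.mk ⟨_, PullbackCone.IsLimit.mk eq
      (fun s => PartOrd.ofHom ⟨fun d => ⟨(s.fst d, s.snd d),
        ConcreteCategory.congr_hom s.condition d⟩,
        fun _ _ h => ⟨s.fst.hom.monotone h, s.snd.hom.monotone h⟩⟩)
      (fun s => rfl) (fun s => rfl) (fun s m h1 h2 => ?_)⟩
    apply PartOrd.ext
    intro d
    apply Subtype.ext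
    exact Prod.ext (ConcreteCategory.congr_hom h1 d)
      (ConcreteCategory.congr_hom h2 d)
  exact @hasPullbacks_of_hasLimit_cospan _ _ (fun {A B C f g} => key f g)

end PreordPullbacks



variable (X : Type u) [Preorder X]

/-! ### The lax comma category `Ord // X` -/

/-- Objects of the lax comma category `Ord // X`: an ordered set `A` together with a
monotone map `α : A → X`. -/
structure OrdComma : Type (u + 1) where
  carrier : Type u
  [str : Preorder carrier]
  map : carrier → X
  mono : Monotone map

attribute [instance] OrdComma.str

variable {X}

/-- Morphisms in `Ord // X`: monotone maps `f` with `α(a) ≤ β(f(a))`. -/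
@[ext]
structure OrdCommaHom (A B : OrdComma X) : Type u where
  toFun : A.carrier → B.carrier
  mono : Monotone toFun
  le : ∀ a, A.map a ≤ B.map (toFun a)

instance : Category (OrdComma X) where
  Hom := OrdCommaHom
  id A := ⟨id, monotone_id, fun _ => le_refl _⟩
  comp f g := ⟨OrdCommaHom.toFun g ∘ OrdCommaHom.toFun f,
    (OrdCommaHom.mono g).comp (OrdCommaHom.mono f),
    fun a => (OrdCommaHom.le f a).trans (OrdCommaHom.le g _)⟩
  id_comp _ := rfl
  comp_id _ := rfl
  assoc _ _ _ := rfl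

/-- The underlying function of a morphism in `Ord // X`. -/
def OrdComma.app {A B : OrdComma X} (f : A ⟶ B) : A.carrier → B.carrier :=
  OrdCommaHom.toFun f

/-! ### The category `Fam(X)` of set-indexed families of elements of `X` -/

variable (X) in
/-- Objects of `Fam(X)`: families `(α_j)_{j ∈ J}` of elements of `X`. -/
structure FamCat : Type (u + 1) where
  idx : Type u
  val : idx → X

/-- Morphisms in `Fam(X)`: functions `f : J → K` with `α_j ≤ β_{f(j)}`. -/
@[ext]
structure FamHom (A B : FamCat X) : Type u where
  toFun : A.idx → B.idx
  le : ∀ j, A.val j ≤ B.val (toFun j)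

instance : Category (FamCat X) where
  Hom := FamHom
  id A := ⟨id, fun _ => le_refl _⟩
  comp f g := ⟨FamHom.toFun g ∘ FamHom.toFun f,
    fun a => (FamHom.le f a).trans (FamHom.le g _)⟩
  id_comp _ := rfl
  comp_id _ := rfl
  assoc _ _ _ := rfl

/-- The underlying function of a morphism in `Fam(X)`. -/
def FamCat.app {A B : FamCat X} (f : A ⟶ B) : A.idx → B.idx :=
  FamHom.toFun f

/-! ### The category `Ord ×_Set Fam(X)` -/

variable (X) in
/-- Objects of `Ord ×_Set Fam(X)`: an ordered set `C` with an arbitrary function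
`χ : C → X`. -/
structure OrdFam : Type (u + 1) where
  carrier : Type u
  [str : Preorder carrier]
  map : carrier → X

attribute [instance] OrdFam.str

/-- Morphisms in `Ord ×_Set Fam(X)`: monotone maps `f` with `χ(c) ≤ ψ(f(c))`. -/
@[ext]
structure OrdFamHom (A B : OrdFam X) : Type u where
  toFun : A.carrier → B.carrier
  mono : Monotone toFun
  le : ∀ a, A.map a ≤ B.map (toFun a)

instance : Category (OrdFam X) where
  Hom := OrdFamHom
  id A := ⟨id, monotone_id, fun _ => le_refl _⟩
  comp f g := ⟨OrdFamHom.toFun g ∘ OrdFamHom.toFun f,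
    (OrdFamHom.mono g).comp (OrdFamHom.mono f),
    fun a => (OrdFamHom.le f a).trans (OrdFamHom.le g _)⟩
  id_comp _ := rfl
  comp_id _ := rfl
  assoc _ _ _ := rfl

/-! ### Functors between these categories -/

variable (X) in
/-- The forgetful functor `Ord // X ⥤ Ord`. -/
def ordCommaForget : OrdComma X ⥤ Preord.{u} where
  obj A := Preord.of A.carrier
  map f := Preord.ofHom ⟨OrdCommaHom.toFun f, OrdCommaHom.mono f⟩
  map_id _ := rfl
  map_comp _ _ := rfl

variable (X) in
/-- The forgetful functor `Ord // X ⥤ Fam(X)`, `(A, α) ↦ (α(a))_{a ∈ A}`. -/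
def ordCommaToFam : OrdComma X ⥤ FamCat X where
  obj A := ⟨A.carrier, A.map⟩
  map f := ⟨OrdCommaHom.toFun f, OrdCommaHom.le f⟩
  map_id _ := rfl
  map_comp _ _ := rfl

variable (X) in
/-- The projection `ρ₁ : Ord ×_Set Fam(X) ⥤ Ord`. -/
def rho₁ : OrdFam X ⥤ Preord.{u} where
  obj A := Preord.of A.carrier
  map f := Preord.ofHom ⟨OrdFamHom.toFun f, OrdFamHom.mono f⟩
  map_id _ := rfl
  map_comp _ _ := rfl

variable (X) in
/-- The projection `ρ₂ : Ord ×_Set Fam(X) ⥤ Fam(X)`. -/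
def rho₂ : OrdFam X ⥤ FamCat X where
  obj A := ⟨A.carrier, A.map⟩
  map f := ⟨OrdFamHom.toFun f, OrdFamHom.le f⟩
  map_id _ := rfl
  map_comp _ _ := rfl

/-! ### Restrictions `f_x : A_x → B_x` -/

/-- For `(A, α)` in `Ord // X` and `x ∈ X`, the ordered set `A_x = {a ∈ A : x ≤ α(a)}`. -/
def OrdComma.fiber (A : OrdComma X) (x : X) : Preord.{u} :=
  Preord.of {a : A.carrier // x ≤ A.map a}

/-- The restriction `f_x : A_x → B_x` of a morphism `f : (A, α) ⟶ (B, β)` of `Ord // X`. -/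
def OrdComma.fiberMap {A B : OrdComma X} (f : A ⟶ B) (x : X) :
    A.fiber x ⟶ B.fiber x :=
  Preord.ofHom ⟨fun a => ⟨OrdCommaHom.toFun f a.1, a.2.trans (OrdCommaHom.le f a.1)⟩,
    fun _ _ h => OrdCommaHom.mono f h⟩



variable {X : Type u} [Preorder X]

theorem OrdComma.hasPullbacks (hm : LocallyBinaryMeets X) :
    HasPullbacks (OrdComma X) := by
  have key : ∀ {A B C : OrdComma X} (f : A ⟶ C) (g : B ⟶ C), HasLimit (cospan f g) := by
    intro A B C f g
    have hmeet : ∀ p : {p : A.carrier × B.carrier //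
        OrdCommaHom.toFun f p.1 = OrdCommaHom.toFun g p.2},
        ∃ m, IsMeet (A.map p.1.1) (B.map p.1.2) m := fun p =>
      hm (C.map (OrdCommaHom.toFun f p.1.1)) _ _ (OrdCommaHom.le f p.1.1)
        (by rw [p.2]; exact OrdCommaHom.le g p.1.2)
    choose μ hμ using hmeet
    let P : OrdComma X :=
      { carrier := {p : A.carrier × B.carrier //
          OrdCommaHom.toFun f p.1 = OrdCommaHom.toFun g p.2}
        map := μ
        mono := fun p q h => by
          have hpq : p.1 ≤ q.1 := h
          exact (hμ q).2.2 _ ((hμ p).1.trans (A.mono (Prod.le_def.mp hpq).1))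
            ((hμ p).2.1.trans (B.mono (Prod.le_def.mp hpq).2)) }
    let pfst : P ⟶ A := ⟨fun p => p.1.1, fun _ _ h => h.1, fun p => (hμ p).1⟩
    let psnd : P ⟶ B := ⟨fun p => p.1.2, fun _ _ h => h.2, fun p => (hμ p).2.1⟩
    have eq : pfst ≫ f = psnd ≫ g := OrdCommaHom.ext (funext fun p => p.2)
    refine HasLimit.mk ⟨_, PullbackCone.IsLimit.mk eq
      (fun s => ⟨fun d => ⟨(OrdCommaHom.toFun s.fst d, OrdCommaHom.toFun s.snd d),
          congrFun (congrArg OrdCommaHom.toFun s.condition) d⟩,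
        fun _ _ h => ⟨OrdCommaHom.mono s.fst h, OrdCommaHom.mono s.snd h⟩,
        fun d => (hμ _).2.2 _ (OrdCommaHom.le s.fst d) (OrdCommaHom.le s.snd d)⟩)
      (fun s => rfl) (fun s => rfl) (fun s m h1 h2 => ?_)⟩
    apply OrdCommaHom.ext
    funext d
    exact Subtype.ext (Prod.ext (congrFun (congrArg OrdCommaHom.toFun h1) d)
      (congrFun (congrArg OrdCommaHom.toFun h2) d))
  exact @hasPullbacks_of_hasLimit_cospan _ _ (fun {A B C f g} => key f g)

theorem FamCat.hasPullbacks (hm : LocallyBinaryMeets X) :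
    HasPullbacks (FamCat X) := by
  have key : ∀ {A B C : FamCat X} (f : A ⟶ C) (g : B ⟶ C), HasLimit (cospan f g) := by
    intro A B C f g
    have hmeet : ∀ p : {p : A.idx × B.idx // FamHom.toFun f p.1 = FamHom.toFun g p.2},
        ∃ m, IsMeet (A.val p.1.1) (B.val p.1.2) m := fun p =>
      hm (C.val (FamHom.toFun f p.1.1)) _ _ (FamHom.le f p.1.1)
        (by rw [p.2]; exact FamHom.le g p.1.2)
    choose μ hμ using hmeet
    let P : FamCat X :=
      { idx := {p : A.idx × B.idx // FamHom.toFun f p.1 = FamHom.toFun g p.2}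
        val := μ }
    let pfst : P ⟶ A := ⟨fun p => p.1.1, fun p => (hμ p).1⟩
    let psnd : P ⟶ B := ⟨fun p => p.1.2, fun p => (hμ p).2.1⟩
    have eq : pfst ≫ f = psnd ≫ g := FamHom.ext (funext fun p => p.2)
    refine HasLimit.mk ⟨_, PullbackCone.IsLimit.mk eq
      (fun s => ⟨fun d => ⟨(FamHom.toFun s.fst d, FamHom.toFun s.snd d),
          congrFun (congrArg FamHom.toFun s.condition) d⟩,
        fun d => (hμ _).2.2 _ (FamHom.le s.fst d) (FamHom.le s.snd d)⟩)
      (fun s => rfl) (fun s => rfl) (fun s m h1 h2 => ?_)⟩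
    apply FamHom.ext
    funext d
    exact Subtype.ext (Prod.ext (congrFun (congrArg FamHom.toFun h1) d)
      (congrFun (congrArg FamHom.toFun h2) d))
  exact @hasPullbacks_of_hasLimit_cospan _ _ (fun {A B C f g} => key f g)

theorem OrdFam.hasPullbacks (hm : LocallyBinaryMeets X) :
    HasPullbacks (OrdFam X) := by
  have key : ∀ {A B C : OrdFam X} (f : A ⟶ C) (g : B ⟶ C), HasLimit (cospan f g) := by
    intro A B C f g
    have hmeet : ∀ p : {p : A.carrier × B.carrier //
        OrdFamHom.toFun f p.1 = OrdFamHom.toFun g p.2},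
        ∃ m, IsMeet (A.map p.1.1) (B.map p.1.2) m := fun p =>
      hm (C.map (OrdFamHom.toFun f p.1.1)) _ _ (OrdFamHom.le f p.1.1)
        (by rw [p.2]; exact OrdFamHom.le g p.1.2)
    choose μ hμ using hmeet
    let P : OrdFam X :=
      { carrier := {p : A.carrier × B.carrier //
          OrdFamHom.toFun f p.1 = OrdFamHom.toFun g p.2}
        map := μ }
    let pfst : P ⟶ A := ⟨fun p => p.1.1, fun _ _ h => h.1, fun p => (hμ p).1⟩
    let psnd : P ⟶ B := ⟨fun p => p.1.2, fun _ _ h => h.2, fun p => (hμ p).2.1⟩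
    have eq : pfst ≫ f = psnd ≫ g := OrdFamHom.ext (funext fun p => p.2)
    refine HasLimit.mk ⟨_, PullbackCone.IsLimit.mk eq
      (fun s => ⟨fun d => ⟨(OrdFamHom.toFun s.fst d, OrdFamHom.toFun s.snd d),
          congrFun (congrArg OrdFamHom.toFun s.condition) d⟩,
        fun _ _ h => ⟨OrdFamHom.mono s.fst h, OrdFamHom.mono s.snd h⟩,
        fun d => (hμ _).2.2 _ (OrdFamHom.le s.fst d) (OrdFamHom.le s.snd d)⟩)
      (fun s => rfl) (fun s => rfl) (fun s m h1 h2 => ?_)⟩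
    apply OrdFamHom.ext
    funext d
    exact Subtype.ext (Prod.ext (congrFun (congrArg OrdFamHom.toFun h1) d)
      (congrFun (congrArg OrdFamHom.toFun h2) d))
  exact @hasPullbacks_of_hasLimit_cospan _ _ (fun {A B C f g} => key f g)



variable (X : Type u) [Preorder X]

/-- The set of connected components of an ordered set `X`: the quotient of `X` by the
equivalence relation generated by `≤` (zigzags). -/
def ConnComp : Type u := Quot (fun a b : X => a ≤ b)

/-- The connected component of `X` corresponding to `i`, as an ordered set. -/
def Component (i : ConnComp X) : Type u :=
  {x : X // Quot.mk (fun a b : X => a ≤ b) x = i}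

instance (i : ConnComp X) : Preorder (Component X i) :=
  Subtype.preorder _

/-- The comparison functor `Ord // X ⥤ ∏_{i ∈ I} Ord // X_i`, where `(X_i)_{i ∈ I}` are the
connected components of `X`: it sends `(A, α)` to the family of (co)restrictions
`(A_i, α_i : A_i → X_i)` with `A_i = α⁻¹(X_i)`. -/
def componentFunctor : OrdComma X ⥤ (∀ i : ConnComp X, OrdComma (Component X i)) where
  obj A := fun i =>
    { carrier := {a : A.carrier // Quot.mk (fun a b : X => a ≤ b) (A.map a) = i}
      map := fun a => ⟨A.map a.1, a.2⟩
      mono := fun _ _ h => A.mono h }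
  map {A B} f := fun i =>
    { toFun := fun a => ⟨OrdCommaHom.toFun f a.1,
        (Quot.sound (OrdCommaHom.le f a.1)).symm.trans a.2⟩
      mono := fun _ _ h => OrdCommaHom.mono f h
      le := fun a => OrdCommaHom.le f a.1 }
  map_id A := by
    funext i
    apply OrdCommaHom.ext
    funext a
    rfl
  map_comp f g := by
    funext i
    apply OrdCommaHom.ext
    funext a
    rfl



/-! ### Transferring comparison functors between adjunctions with the same left adjoint -/

section Transfer

variable {C : Type*} [Category C] {D : Type*} [Category D]
variable {L : C ⥤ D} {R R' : D ⥤ C} (adj : L ⊣ R) (adj' : L ⊣ R')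

/-- The induced isomorphism of monads. -/
def monadIsoOfAdj : adj.toMonad ≅ adj'.toMonad :=
  MonadIso.mk (Functor.isoWhiskerLeft L (Adjunction.rightAdjointUniq adj adj'))
    (fun X => by
      exact Adjunction.unit_rightAdjointUniq_hom_app adj adj' X)
    (fun X => by
      dsimp [Adjunction.toMonad]
      rw [Category.assoc]
      erw [
        ← (Adjunction.rightAdjointUniq adj adj').hom.naturality (adj'.counit.app (L.obj X)),
        ← Functor.map_comp_assoc,
        Adjunction.rightAdjointUniq_hom_app_counit adj adj']
      rfl)

/-- Comparisons for two adjunctions of the same left adjoint agree up to equivalence. -/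
def comparisonIsoOfAdj :
    Monad.comparison adj ⋙ (Monad.algebraEquivOfIsoMonads (monadIsoOfAdj adj adj')).functor
      ≅ Monad.comparison adj' :=
  NatIso.ofComponents
    (fun X => Monad.Algebra.isoMk ((Adjunction.rightAdjointUniq adj adj').app X)
      (by
        dsimp [monadIsoOfAdj]
        erw [← R'.map_comp, Adjunction.rightAdjointUniq_hom_app_counit adj adj']
        erw [Category.assoc]
        erw [(Adjunction.rightAdjointUniq adj adj').hom.naturality (adj.counit.app X)]
        erw [← Category.assoc, (Adjunction.rightAdjointUniq adj adj').inv_hom_id_app (L.obj (R.obj X)),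
          Category.id_comp]
        rfl))
    (fun u => by
      apply Monad.Algebra.Hom.ext
      exact (Adjunction.rightAdjointUniq adj adj').hom.naturality u)

theorem transfer_isEquivalence [h : (Monad.comparison adj).IsEquivalence] :
    (Monad.comparison adj').IsEquivalence :=
  Functor.isEquivalence_of_iso (comparisonIsoOfAdj adj adj')

theorem transfer_full [h : (Monad.comparison adj).Full] : (Monad.comparison adj').Full :=
  Functor.Full.of_iso (comparisonIsoOfAdj adj adj')

theorem transfer_faithful [h : (Monad.comparison adj).Faithful] :
    (Monad.comparison adj').Faithful :=
  Functor.Faithful.of_iso (comparisonIsoOfAdj adj adj')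

end Transfer


/-! ### An explicit pullback adjunction in `Preord` -/

section PreordExplicit

variable {A B : Preord.{u}} (f : A ⟶ B)

theorem preW {Y : Preord.{u}} {c c' : Over Y} (u : c ⟶ c') (z : ↥c.left) :
    c'.hom (u.left z) = c.hom z := by
  conv_rhs => rw [← Over.w u]
  rfl

/-- Explicit pullback functor `Over B ⥤ Over A` in `Preord`. -/
def preR : Over B ⥤ Over A where
  obj c := Over.mk (Y := Preord.of {p : ↥c.left × ↥A // c.hom p.1 = f p.2})
    (Preord.ofHom ⟨fun p => p.1.2, fun _ _ h => h.2⟩)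
  map {c c'} u := Over.homMk
    (Preord.ofHom ⟨fun p => ⟨(u.left p.1.1, p.1.2), by rw [preW u]; exact p.2⟩,
     fun _ _ h => ⟨u.left.hom.monotone h.1, h.2⟩⟩)
    rfl
  map_id c := by
    apply Over.OverMorphism.ext
    rfl
  map_comp u v := by
    apply Over.OverMorphism.ext
    rfl

/-- The explicit adjunction `Over.map f ⊣ preR f` in `Preord`. -/
def preAdj : Over.map f ⊣ preR f :=
  Adjunction.mkOfHomEquiv
    { homEquiv := fun d c =>
        { toFun := fun v => Over.homMk
            (Preord.ofHom ⟨fun e => ⟨(v.left e, d.hom e), preW v e⟩,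
              fun _ _ h => ⟨v.left.hom.monotone h, d.hom.hom.monotone h⟩⟩)
            rfl
          invFun := fun w => Over.homMk
            (Preord.ofHom ⟨fun e => (w.left e).1.1, fun _ _ h => (w.left.hom.monotone h).1⟩)
            (by
              apply Preord.ext; intro e
              have h1 := (w.left e).2
              have h2 := preW w e
              exact h1.trans (congrArg f h2))
          left_inv := fun v => by apply Over.OverMorphism.ext; rfl
          right_inv := fun w => by
            apply Over.OverMorphism.ext
            apply Preord.ext; intro e
            exact Subtype.ext (Prod.ext rfl (preW w e).symm) }
      homEquiv_naturality_left_symm := by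
        intros; apply Over.OverMorphism.ext; rfl
      homEquiv_naturality_right := by
        intros; apply Over.OverMorphism.ext; rfl }

end PreordExplicit


/-! ### Extraction of concrete descent consequences in `Preord` -/

section PreordDescent

variable {A B : Preord.{u}} (f : A ⟶ B)

/-- A discrete preorder. -/
def discP (T : Type u) : Preorder T where
  le a b := a = b
  lt a b := a = b ∧ ¬b = a
  le_refl _ := rfl
  le_trans _ _ _ h1 h2 := by exact Eq.trans h1 h2
  lt_iff_le_not_ge _ _ := Iff.rfl

/-- The two-element chain as a preorder on `ULift Bool`. -/
def chainP : Preorder (ULift.{u} Bool) :=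
  Preorder.lift ULift.down

theorem uliftExt {i j : ULift.{u} Bool} (h : i.down = j.down) : i = j := by
  cases i; cases j; cases h; rfl

theorem pre_surj (hfa : (Monad.comparison (preAdj f)).Faithful) (b : ↥B) :
    ∃ a : ↥A, f a = b := by
  by_contra hno
  push_neg at hno
  let P1 : Preord.{u} := Preord.of PUnit.{u + 1}
  let P2 : Preord.{u} := @Preord.of (ULift.{u} Bool) (discP _)
  let c : Over B := Over.mk (Y := P1) (Preord.ofHom ⟨fun _ => b, fun _ _ _ => le_refl b⟩)
  let c' : Over B := Over.mk (Y := P2) (ConcreteCategory.ofHom (C := Preord) (@OrderHom.mk _ _ P2.str _ (fun _ => b) (fun _ _ _ => le_refl b)))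
  let h₁ : c ⟶ c' := Over.homMk (ConcreteCategory.ofHom (C := Preord) (@OrderHom.mk _ _ _ P2.str (fun _ => ⟨false⟩) (fun _ _ _ => @le_refl _ P2.str _))) rfl
  let h₂ : c ⟶ c' := Over.homMk (ConcreteCategory.ofHom (C := Preord) (@OrderHom.mk _ _ _ P2.str (fun _ => ⟨true⟩) (fun _ _ _ => @le_refl _ P2.str _))) rfl
  have hKeq : (Monad.comparison (preAdj f)).map h₁ = (Monad.comparison (preAdj f)).map h₂ := by
    apply Monad.Algebra.Hom.ext
    apply Over.OverMorphism.ext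
    apply Preord.ext; intro e
    exact absurd e.2.symm (hno e.1.2)
  have heq := hfa.map_injective hKeq
  have hft : (⟨false⟩ : ULift.{u} Bool) = ⟨true⟩ :=
    congrFun (congrArg (fun (m : c ⟶ c') => (m.left : ↥P1 → ↥P2)) heq) PUnit.unit
  exact Bool.noConfusion (congrArg ULift.down hft)

theorem pre_lift (hfu : (Monad.comparison (preAdj f)).Full)
    (hfa : (Monad.comparison (preAdj f)).Faithful) (b b' : ↥B) (hbb : b ≤ b') :
    ∃ a a' : ↥A, a ≤ a' ∧ f a = b ∧ f a' = b' := by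
  by_cases hbe : b = b'
  · obtain ⟨a, ha⟩ := pre_surj f hfa b
    exact ⟨a, a, le_refl a, ha, hbe ▸ ha⟩
  by_contra hno
  push_neg at hno
  let P1 : Preord.{u} := @Preord.of (ULift.{u} Bool) chainP
  let P2 : Preord.{u} := @Preord.of (ULift.{u} Bool) (discP _)
  have hmono : ∀ i j : Bool, i ≤ j → (bif i then b' else b) ≤ (bif j then b' else b) := by
    intro i j hij
    cases i <;> cases j
    · exact le_refl _
    · exact hbb
    · exact absurd hij (by decide)
    · exact le_refl _
  let c : Over B := Over.mk (Y := P1)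
    (Preord.ofHom ⟨fun i => bif i.down then b' else b, fun i j hij => hmono _ _ hij⟩)
  let c' : Over B := Over.mk (Y := P2)
    (ConcreteCategory.ofHom (C := Preord) (@OrderHom.mk _ _ P2.str _ (fun i => bif i.down then b' else b) (fun i j hij => by have h : i = j := hij; exact h ▸ le_refl _)))
  have hcross : ∀ e e' : ↥(((preR f).obj c).left), e ≤ e' → e.1.1 = e'.1.1 := by
    intro e e' h
    apply uliftExt
    have h1 : e.1.1.down ≤ e'.1.1.down := h.1
    rcases hd : e.1.1.down with _ | _ <;> rcases hd' : e'.1.1.down with _ | _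
    · rfl
    · exfalso
      refine hno e.1.2 e'.1.2 h.2 ?_ ?_
      · refine (e.2.symm.trans ?_)
        show (bif e.1.1.down then b' else b) = b
        rw [hd]; rfl
      · refine (e'.2.symm.trans ?_)
        show (bif e'.1.1.down then b' else b) = b'
        rw [hd']; rfl
    · rw [hd, hd'] at h1; exact absurd h1 (by decide)
    · rfl
  let g0 : (preR f).obj c ⟶ (preR f).obj c' := Over.homMk
    (ConcreteCategory.ofHom (C := Preord) (@OrderHom.mk _ _ _ ((preR f).obj c').left.str (fun e => ⟨e.1, e.2⟩) (fun e e' h => ⟨hcross e e' h, h.2⟩))) rfl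
  have hsq : ((preAdj f).toMonad).map g0 ≫ ((Monad.comparison (preAdj f)).obj c').a =
      ((Monad.comparison (preAdj f)).obj c).a ≫ g0 := by
    apply Over.OverMorphism.ext
    rfl
  obtain ⟨h, -⟩ := hfu.map_surjective
    (⟨g0, hsq⟩ : (Monad.comparison (preAdj f)).obj c ⟶ (Monad.comparison (preAdj f)).obj c')
  have hle := h.left.hom.monotone
    (show ((⟨false⟩ : ↥P1)) ≤ (⟨true⟩ : ↥P1) from Bool.false_le true)
  have heq : h.left ⟨false⟩ = h.left ⟨true⟩ := hle
  have e1 : (bif (h.left ⟨false⟩).down then b' else b) = b := preW h ⟨false⟩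
  have e2 : (bif (h.left ⟨true⟩).down then b' else b) = b' := preW h ⟨true⟩
  rw [← heq] at e2
  rcases hd : (h.left ⟨false⟩).down with _ | _
  · rw [hd] at e2; exact hbe e2
  · rw [hd] at e1; exact hbe e1.symm

theorem pre_lift' (hd : IsDescentMorphism f) (b b' : ↥B) (hbb : b ≤ b') :
    ∃ a a' : ↥A, a ≤ a' ∧ f a = b ∧ f a' = b' := by
  haveI := hd.1
  haveI := hd.2
  exact pre_lift f (transfer_full (Over.mapPullbackAdj f) (preAdj f))
    (transfer_faithful (Over.mapPullbackAdj f) (preAdj f)) b b' hbb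

end PreordDescent


/-! ### An explicit pullback adjunction in `OrdComma X` -/

section OrdCommaExplicit

variable {X : Type u} [Preorder X]

/-- A chosen binary meet. -/
noncomputable def muF (hm : LocallyBinaryMeets X) (x y z : X) (hy : y ≤ x) (hz : z ≤ x) : X :=
  (hm x y z hy hz).choose

theorem muF_spec (hm : LocallyBinaryMeets X) (x y z : X) (hy : y ≤ x) (hz : z ≤ x) :
    IsMeet y z (muF hm x y z hy hz) :=
  (hm x y z hy hz).choose_spec

theorem ordW {Y : OrdComma X} {c c' : Over Y} (u : c ⟶ c') (z : c.left.carrier) :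
    OrdCommaHom.toFun c'.hom (OrdCommaHom.toFun u.left z) = OrdCommaHom.toFun c.hom z := by
  conv_rhs => rw [← Over.w u]
  rfl

variable {A B : OrdComma X}

/-- Carrier of the explicit pullback. -/
def PbC (f : A ⟶ B) (c : Over B) : Type u :=
  {p : c.left.carrier × A.carrier //
    OrdCommaHom.toFun c.hom p.1 = OrdCommaHom.toFun f p.2}

instance (f : A ⟶ B) (c : Over B) : Preorder (PbC f c) :=
  Subtype.preorder _

theorem PbC.le_def {f : A ⟶ B} {c : Over B} {p q : PbC f c} (h : p ≤ q) :
    p.1.1 ≤ q.1.1 ∧ p.1.2 ≤ q.1.2 := by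
  have hpq : p.1 ≤ q.1 := h
  exact ⟨(Prod.le_def.mp hpq).1, (Prod.le_def.mp hpq).2⟩

theorem PbC.le_mk {f : A ⟶ B} {c : Over B} {p q : PbC f c}
    (h1 : p.1.1 ≤ q.1.1) (h2 : p.1.2 ≤ q.1.2) : p ≤ q := by
  show p.1 ≤ q.1
  exact Prod.le_def.mpr ⟨h1, h2⟩

/-- Value of the explicit pullback. -/
noncomputable def pbVal (hm : LocallyBinaryMeets X) (f : A ⟶ B) (c : Over B) (p : PbC f c) :
    X :=
  muF hm (B.map (OrdCommaHom.toFun f p.1.2)) (c.left.map p.1.1) (A.map p.1.2)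
    (by rw [← p.2]; exact OrdCommaHom.le c.hom p.1.1) (OrdCommaHom.le f p.1.2)

theorem pbVal_spec (hm : LocallyBinaryMeets X) (f : A ⟶ B) (c : Over B) (p : PbC f c) :
    IsMeet (c.left.map p.1.1) (A.map p.1.2) (pbVal hm f c p) :=
  muF_spec hm _ _ _ _ _

/-- Explicit pullback object in `OrdComma X`. -/
noncomputable def ordPb (hm : LocallyBinaryMeets X) (f : A ⟶ B) (c : Over B) : OrdComma X where
  carrier := PbC f c
  map := pbVal hm f c
  mono p q hpq :=
    (pbVal_spec hm f c q).2.2 _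
      ((pbVal_spec hm f c p).1.trans (c.left.mono (PbC.le_def hpq).1))
      ((pbVal_spec hm f c p).2.1.trans (A.mono (PbC.le_def hpq).2))

/-- Explicit pullback functor `Over B ⥤ Over A` in `OrdComma X`. -/
noncomputable def ordR (hm : LocallyBinaryMeets X) (f : A ⟶ B) : Over B ⥤ Over A where
  obj c := Over.mk (Y := ordPb hm f c)
    ⟨fun p => p.1.2, fun _ _ h => (PbC.le_def h).2, fun p => (pbVal_spec hm f c p).2.1⟩
  map {c c'} u := Over.homMk
    ⟨fun p => ⟨(OrdCommaHom.toFun u.left p.1.1, p.1.2), by rw [ordW u]; exact p.2⟩,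
     fun p q h => PbC.le_mk (OrdCommaHom.mono u.left (PbC.le_def h).1) (PbC.le_def h).2,
     fun p => (pbVal_spec hm f c' _).2.2 _
       ((pbVal_spec hm f c p).1.trans (OrdCommaHom.le u.left p.1.1))
       (pbVal_spec hm f c p).2.1⟩
    (by apply OrdCommaHom.ext; rfl)
  map_id c := by apply Over.OverMorphism.ext; apply OrdCommaHom.ext; rfl
  map_comp u v := by apply Over.OverMorphism.ext; apply OrdCommaHom.ext; rfl

/-- The explicit adjunction `Over.map f ⊣ ordR hm f` in `OrdComma X`. -/
noncomputable def ordAdj (hm : LocallyBinaryMeets X) (f : A ⟶ B) :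
    Over.map f ⊣ ordR hm f :=
  Adjunction.mkOfHomEquiv
    { homEquiv := fun d c =>
        { toFun := fun v => Over.homMk
            ⟨fun e => ⟨(OrdCommaHom.toFun v.left e, OrdCommaHom.toFun d.hom e), ordW v e⟩,
             fun _ _ h => PbC.le_mk (OrdCommaHom.mono v.left h) (OrdCommaHom.mono d.hom h),
             fun e => (pbVal_spec hm f c _).2.2 _ (OrdCommaHom.le v.left e)
               (OrdCommaHom.le d.hom e)⟩
            (by apply OrdCommaHom.ext; rfl)
          invFun := fun w => Over.homMk
            ⟨fun e => ((OrdCommaHom.toFun w.left e : PbC f c)).1.1,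
             fun p q h => (PbC.le_def (OrdCommaHom.mono w.left h)).1,
             fun e => (OrdCommaHom.le w.left e).trans (pbVal_spec hm f c _).1⟩
            (by
              apply OrdCommaHom.ext; funext e
              exact ((OrdCommaHom.toFun w.left e : PbC f c)).2.trans
                (congrArg (OrdCommaHom.toFun f) (ordW w e)))
          left_inv := fun v => by
            apply Over.OverMorphism.ext; apply OrdCommaHom.ext; rfl
          right_inv := fun w => by
            apply Over.OverMorphism.ext; apply OrdCommaHom.ext; funext e
            exact Subtype.ext (Prod.ext rfl (ordW w e).symm) }
      homEquiv_naturality_left_symm := by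
        intros; apply Over.OverMorphism.ext; apply OrdCommaHom.ext; rfl
      homEquiv_naturality_right := by
        intros; apply Over.OverMorphism.ext; apply OrdCommaHom.ext; rfl }

end OrdCommaExplicit

/-- **Theorem (Clementino–Janelidze, sufficiency).** For `X` locally complete with a bottom
element and `f : (A, α) ⟶ (B, β)` in `Ord // X`, if the underlying map `f` is an effective
descent morphism in `Ord` and every restriction `f_x : A_x → B_x` is a descent morphism in
`Ord`, then `f` is an effective descent morphism in `Ord // X`. -/
theorem statement5 {X : Type u} [Preorder X] (hX : LocallyComplete X)
    (hbot : ∃ b : X, ∀ x : X, b ≤ x)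
    {A B : OrdComma X} (f : A ⟶ B)
    (h₁ : IsEffectiveDescentMorphism ((ordCommaForget X).map f))
    (h₂ : ∀ x : X, IsDescentMorphism (OrdComma.fiberMap f x)) :
    @IsEffectiveDescentMorphism (OrdComma X) _ (OrdComma.hasPullbacks hX.meets) _ _ f := by
  obtain ⟨bot, hbotle⟩ := hbot
  have hm : LocallyBinaryMeets X := hX.meets
  haveI : HasPullbacks (OrdComma X) := OrdComma.hasPullbacks hX.meets
  -- Step 1: extraction of concrete lifting properties from `h₂`.
  have hlift : ∀ (x : X) (b b' : B.carrier), x ≤ B.map b → x ≤ B.map b' → b ≤ b' →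
      ∃ a a' : A.carrier, a ≤ a' ∧ OrdCommaHom.toFun f a = b ∧ OrdCommaHom.toFun f a' = b' ∧
        x ≤ A.map a ∧ x ≤ A.map a' := by
    intro x b b' hxb hxb' hbb
    obtain ⟨a, a', haa, ha, ha'⟩ := pre_lift' (OrdComma.fiberMap f x) (h₂ x)
      (⟨b, hxb⟩ : {w : B.carrier // x ≤ B.map w}) ⟨b', hxb'⟩ hbb
    exact ⟨a.1, a'.1, haa, congrArg Subtype.val ha, congrArg Subtype.val ha', a.2, a'.2⟩
  have hsurj : ∀ (x : X) (b : B.carrier), x ≤ B.map b →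
      ∃ a : A.carrier, OrdCommaHom.toFun f a = b ∧ x ≤ A.map a := by
    intro x b hxb
    obtain ⟨a, _, _, ha, _, ha2, _⟩ := hlift x b b hxb hxb (le_refl b)
    exact ⟨a, ha, ha2⟩
  have hsurj0 : ∀ b : B.carrier, ∃ a, OrdCommaHom.toFun f a = b := by
    intro b
    obtain ⟨a, ha, -⟩ := hsurj bot b (hbotle _)
    exact ⟨a, ha⟩
  have hlift0 : ∀ b b' : B.carrier, b ≤ b' →
      ∃ a a', a ≤ a' ∧ OrdCommaHom.toFun f a = b ∧ OrdCommaHom.toFun f a' = b' := by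
    intro b b' h
    obtain ⟨a, a', h1, h2, h3, -, -⟩ := hlift bot b b' (hbotle _) (hbotle _) h
    exact ⟨a, a', h1, h2, h3⟩
  -- Step 2: the comparison functor for the explicit adjunction is faithful.
  haveI Kfaith : (Monad.comparison (ordAdj hm f)).Faithful := by
    refine ⟨?_⟩
    intro c c' u v huv
    have h0 : OrdCommaHom.toFun ((ordR hm f).map u).left =
        OrdCommaHom.toFun ((ordR hm f).map v).left :=
      congrArg (fun t : (Monad.comparison (ordAdj hm f)).obj c ⟶
          (Monad.comparison (ordAdj hm f)).obj c' =>
        OrdCommaHom.toFun (Monad.Algebra.Hom.f t).left) huv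
    apply Over.OverMorphism.ext; apply OrdCommaHom.ext; funext c₀
    obtain ⟨a, ha⟩ := hsurj0 (OrdCommaHom.toFun c.hom c₀)
    have he := congrFun h0 (⟨(c₀, a), ha.symm⟩ : PbC f c)
    exact congrArg Prod.fst (congrArg Subtype.val he)
  -- Step 3: the comparison functor for the explicit adjunction is full.
  haveI Kfull : (Monad.comparison (ordAdj hm f)).Full := by
    refine ⟨?_⟩
    intro c c' m
    have hsnd : ∀ e : PbC f c, (OrdCommaHom.toFun m.f.left e : PbC f c').1.2 = e.1.2 :=
      fun e => ordW m.f e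
    have hsq : OrdCommaHom.toFun (((ordAdj hm f).toMonad).map m.f ≫
          ((Monad.comparison (ordAdj hm f)).obj c').a).left =
        OrdCommaHom.toFun (((Monad.comparison (ordAdj hm f)).obj c).a ≫ m.f).left :=
      congrArg (fun t => OrdCommaHom.toFun (CommaMorphism.left t)) m.h
    have hind : ∀ (e : PbC f c) (a' : A.carrier)
        (h' : OrdCommaHom.toFun f e.1.2 = OrdCommaHom.toFun f a'),
        ((OrdCommaHom.toFun m.f.left e : PbC f c')).1.1 =
          ((OrdCommaHom.toFun m.f.left ⟨(e.1.1, a'), e.2.trans h'⟩ : PbC f c')).1.1 := by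
      intro e a' h'
      have hz := congrFun hsq
        (⟨(e, a'), h'⟩ : PbC f ((Over.map f).obj ((ordR hm f).obj c)))
      have hz1 := congrArg Subtype.val hz
      have hz2 := congrArg Prod.fst hz1
      exact hz2
    choose sa hsa1 _ using fun (c₀ : c.left.carrier) =>
      hsurj bot (OrdCommaHom.toFun c.hom c₀) (hbotle _)
    let hfun : c.left.carrier → c'.left.carrier := fun c₀ =>
      ((OrdCommaHom.toFun m.f.left ⟨(c₀, sa c₀), (hsa1 c₀).symm⟩ : PbC f c')).1.1
    have hind' : ∀ e : PbC f c,
        hfun e.1.1 = ((OrdCommaHom.toFun m.f.left e : PbC f c')).1.1 := by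
      intro e
      have := hind e (sa e.1.1) (e.2.symm.trans (hsa1 e.1.1).symm)
      exact this.symm
    have hmono : Monotone hfun := by
      intro c₀ c₁ hcc
      obtain ⟨a₀, a₁, h01, hf0, hf1⟩ := hlift0 _ _ (OrdCommaHom.mono c.hom hcc)
      have h2 := OrdCommaHom.mono m.f.left
        (PbC.le_mk (p := ⟨(c₀, a₀), hf0.symm⟩) (q := ⟨(c₁, a₁), hf1.symm⟩) hcc h01)
      have h3 := (PbC.le_def h2).1
      rw [← hind' ⟨(c₀, a₀), hf0.symm⟩, ← hind' ⟨(c₁, a₁), hf1.symm⟩] at h3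
      exact h3
    have hle : ∀ c₀, c.left.map c₀ ≤ c'.left.map (hfun c₀) := by
      intro c₀
      obtain ⟨a, ha1, ha2⟩ := hsurj (c.left.map c₀) (OrdCommaHom.toFun c.hom c₀)
        (OrdCommaHom.le c.hom c₀)
      have h4 := OrdCommaHom.le m.f.left (⟨(c₀, a), ha1.symm⟩ : PbC f c)
      have h5 : c.left.map c₀ ≤ pbVal hm f c ⟨(c₀, a), ha1.symm⟩ :=
        (pbVal_spec hm f c _).2.2 _ (le_refl _) ha2
      have h6 := (pbVal_spec hm f c' (OrdCommaHom.toFun m.f.left ⟨(c₀, a), ha1.symm⟩)).1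
      rw [← hind' ⟨(c₀, a), ha1.symm⟩] at h6
      exact (h5.trans h4).trans h6
    have hover : ∀ c₀, OrdCommaHom.toFun c'.hom (hfun c₀) = OrdCommaHom.toFun c.hom c₀ := by
      intro c₀
      have h7 := (OrdCommaHom.toFun m.f.left ⟨(c₀, sa c₀), (hsa1 c₀).symm⟩ : PbC f c').2
      rw [hsnd ⟨(c₀, sa c₀), (hsa1 c₀).symm⟩] at h7
      exact h7.trans (hsa1 c₀)
    refine ⟨Over.homMk ⟨hfun, hmono, hle⟩ (by apply OrdCommaHom.ext; funext c₀; exact hover c₀), ?_⟩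
    apply Monad.Algebra.Hom.ext
    apply Over.OverMorphism.ext; apply OrdCommaHom.ext; funext e
    exact Subtype.ext (Prod.ext (hind' e) (hsnd e).symm)
  -- Step 4: essential surjectivity.
  haveI Ksurj : (Monad.comparison (ordAdj hm f)).EssSurj := by
    refine ⟨fun alg => ?_⟩
    set D := alg.A with hD
    set q := D.hom with hq
    -- the concrete action
    let xi : ∀ (d : D.left.carrier) (a : A.carrier),
        OrdCommaHom.toFun f (OrdCommaHom.toFun q d) = OrdCommaHom.toFun f a →
          D.left.carrier := fun d a h =>
      OrdCommaHom.toFun alg.a.left (⟨(d, a), h⟩ : PbC f ((Over.map f).obj D))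
    have hxi_q : ∀ d a h, OrdCommaHom.toFun q (xi d a h) = a := fun d a h =>
      ordW alg.a (⟨(d, a), h⟩ : PbC f ((Over.map f).obj D))
    have hxi_le : ∀ d a h w, w ≤ D.left.map d → w ≤ A.map a → w ≤ D.left.map (xi d a h) := by
      intro d a h w w1 w2
      exact le_trans
        ((pbVal_spec hm f ((Over.map f).obj D) ⟨(d, a), h⟩).2.2 w w1 w2)
        (OrdCommaHom.le alg.a.left ⟨(d, a), h⟩)
    have hxi_unitEq := congrArg (fun t => OrdCommaHom.toFun (CommaMorphism.left t)) alg.unit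
    have hxi_unit : ∀ d h, xi d (OrdCommaHom.toFun q d) h = d := fun d h =>
      congrFun hxi_unitEq d
    have hxi_assocEq := congrArg (fun t => OrdCommaHom.toFun (CommaMorphism.left t)) alg.assoc
    have hxi_assoc : ∀ (d : D.left.carrier) (a₁ a₂ : A.carrier)
        (h1 : OrdCommaHom.toFun f (OrdCommaHom.toFun q d) = OrdCommaHom.toFun f a₁)
        (h2 : OrdCommaHom.toFun f a₁ = OrdCommaHom.toFun f a₂)
        (h3 : OrdCommaHom.toFun f (OrdCommaHom.toFun q (xi d a₁ h1)) = OrdCommaHom.toFun f a₂)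
        (h4 : OrdCommaHom.toFun f (OrdCommaHom.toFun q d) = OrdCommaHom.toFun f a₂),
        xi d a₂ h4 = xi (xi d a₁ h1) a₂ h3 := by
      intro d a₁ a₂ h1 h2 h3 h4
      exact congrFun hxi_assocEq
        (⟨(⟨(d, a₁), h1⟩, a₂), h2⟩ :
          PbC f ((Over.map f).obj ((ordR hm f).obj ((Over.map f).obj D))))
    -- the underlying `Preord` algebra
    let f₀ := (ordCommaForget X).map f
    let A₀ := (ordCommaForget X).obj A
    let D₀ : Preord.{u} := Preord.of D.left.carrier
    let q₀ : D₀ ⟶ A₀ := Preord.ofHom ⟨OrdCommaHom.toFun q, OrdCommaHom.mono q⟩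
    let dP : Over A₀ := Over.mk q₀
    let algP : ((preAdj f₀).toMonad).Algebra :=
      { A := dP
        a := Over.homMk
          (Preord.ofHom ⟨fun e => xi e.1.1 e.1.2 e.2,
            fun e e' h => OrdCommaHom.mono alg.a.left h⟩)
          (by apply Preord.ext; intro e; exact hxi_q e.1.1 e.1.2 e.2)
        unit := by
          apply Over.OverMorphism.ext; apply Preord.ext; intro d
          exact hxi_unit d _
        assoc := by
          apply Over.OverMorphism.ext; apply Preord.ext; intro z
          exact hxi_assoc z.1.1.1.1 z.1.1.1.2 z.1.2 z.1.1.2 z.2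
            ((congrArg (OrdCommaHom.toFun f) (hxi_q z.1.1.1.1 z.1.1.1.2 z.1.1.2)).trans z.2)
            (z.1.1.2.trans z.2) }
    -- use effective descent in `Preord`
    haveI hK1 : (Monad.comparison (Over.mapPullbackAdj f₀)).IsEquivalence := h₁
    haveI hK2 : (Monad.comparison (preAdj f₀)).IsEquivalence :=
      transfer_isEquivalence (Over.mapPullbackAdj f₀) (preAdj f₀)
    let cP : Over ((ordCommaForget X).obj B) := (Monad.comparison (preAdj f₀)).objPreimage algP
    let Φ : (Monad.comparison (preAdj f₀)).obj cP ≅ algP :=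
      (Monad.comparison (preAdj f₀)).objObjPreimageIso algP
    let φ := Φ.hom.f.left
    let ψ := Φ.inv.f.left
    have e1 := congrArg CommaMorphism.left (congrArg Monad.Algebra.Hom.f Φ.hom_inv_id)
    have e1' := congrArg CommaMorphism.left (congrArg Monad.Algebra.Hom.f Φ.inv_hom_id)
    have hφψ : ∀ e, ψ (φ e) = e := fun e => DFunLike.congr_fun e1 e
    have hψφ : ∀ d, φ (ψ d) = d := fun d => DFunLike.congr_fun e1' d
    have hqφ : ∀ e, OrdCommaHom.toFun q (φ e) = e.1.2 := fun e => preW Φ.hom.f e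
    have heqv := congrArg CommaMorphism.left Φ.hom.h
    have hxiφ : ∀ (e : {p : ↥cP.left × ↥A₀ // cP.hom p.1 = f₀ p.2}) (a₂ : A.carrier)
        (h2 : f₀ e.1.2 = f₀ a₂)
        (h3 : OrdCommaHom.toFun f (OrdCommaHom.toFun q (φ e)) = OrdCommaHom.toFun f a₂)
        (h4 : cP.hom e.1.1 = f₀ a₂),
        xi (φ e) a₂ h3 = φ ⟨(e.1.1, a₂), h4⟩ := by
      intro e a₂ h2 h3 h4
      exact DFunLike.congr_fun heqv ⟨(e, a₂), h2⟩
    -- the structure map of the glued object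
    choose astar hstar1 hstar2 using fun (cc : ↥cP.left) =>
      hsurj (B.map (cP.hom cc)) (cP.hom cc) (le_refl _)
    let estar : ∀ cc : ↥cP.left, {p : ↥cP.left × ↥A₀ // cP.hom p.1 = f₀ p.2} :=
      fun cc => ⟨(cc, astar cc), (hstar1 cc).symm⟩
    let χ : ↥cP.left → X := fun cc => D.left.map (φ (estar cc))
    have hγA : ∀ e, D.left.map (φ e) ≤ A.map e.1.2 := by
      intro e
      have := OrdCommaHom.le q (φ e)
      rw [hqφ e] at this
      exact this
    have hγB : ∀ e, D.left.map (φ e) ≤ B.map (cP.hom e.1.1) := by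
      intro e
      refine (hγA e).trans ?_
      have h8 : cP.hom e.1.1 = OrdCommaHom.toFun f e.1.2 := e.2
      have h9 := OrdCommaHom.le f e.1.2
      rw [← h8] at h9
      exact h9
    have hgen : ∀ e, D.left.map (φ e) ≤ χ e.1.1 := by
      intro e
      have h3 : OrdCommaHom.toFun f (OrdCommaHom.toFun q (φ e)) =
          OrdCommaHom.toFun f (astar e.1.1) := by
        rw [hqφ e]
        exact e.2.symm.trans (hstar1 e.1.1).symm
      have h5 := hxi_le (φ e) (astar e.1.1) h3 (D.left.map (φ e)) (le_refl _)
        ((hγB e).trans (hstar2 e.1.1))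
      have h6 := hxiφ e (astar e.1.1)
        (e.2.symm.trans (hstar1 e.1.1).symm) h3 (hstar1 e.1.1).symm
      rw [h6] at h5
      exact h5
    have hmeet : ∀ (e) (w : X), w ≤ A.map e.1.2 → w ≤ χ e.1.1 → w ≤ D.left.map (φ e) := by
      intro e w w1 w2
      have h3 : OrdCommaHom.toFun f (OrdCommaHom.toFun q (φ (estar e.1.1))) =
          OrdCommaHom.toFun f e.1.2 := by
        rw [hqφ (estar e.1.1)]
        exact (hstar1 e.1.1).trans e.2
      have h5 := hxi_le (φ (estar e.1.1)) e.1.2 h3 w w2 w1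
      have h6 := hxiφ (estar e.1.1) e.1.2 ((hstar1 e.1.1).trans e.2) h3 e.2
      rw [h6] at h5
      exact h5
    have hχB : ∀ cc, χ cc ≤ B.map (cP.hom cc) := fun cc => hγB (estar cc)
    have hχmono : Monotone χ := by
      intro cc cc' hcc
      have hb : @LE.le B.carrier _ (cP.hom cc) (cP.hom cc') := cP.hom.hom.monotone hcc
      obtain ⟨a₀, a₁, h01, hf0, hf1, hx0, hx1⟩ := hlift (χ cc) (cP.hom cc) (cP.hom cc')
        (hχB cc) ((hχB cc).trans (B.mono hb)) hb
      have s1 : χ cc ≤ D.left.map (φ ⟨(cc, a₀), hf0.symm⟩) :=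
        hmeet ⟨(cc, a₀), hf0.symm⟩ (χ cc) hx0 (le_refl _)
      have s2 : @LE.le D.left.carrier _ (φ ⟨(cc, a₀), hf0.symm⟩) (φ ⟨(cc', a₁), hf1.symm⟩) :=
        φ.hom.monotone (Prod.le_def.mpr ⟨hcc, h01⟩)
      exact ((s1.trans (D.left.mono s2)).trans (hgen ⟨(cc', a₁), hf1.symm⟩))
    -- the glued object in `OrdComma X`
    let CCo : OrdComma X := { carrier := ↥cP.left, map := χ, mono := hχmono }
    let pC : CCo ⟶ B := ⟨fun cc => cP.hom cc, cP.hom.hom.monotone, hχB⟩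
    let Chat : Over B := Over.mk pC
    -- the isomorphism of algebras
    have hrepack : ∀ e : PbC f Chat, cP.hom e.1.1 = f₀ e.1.2 := fun e => e.2
    let isoHom : ordPb hm f Chat ⟶ D.left :=
      ⟨fun e => φ ⟨(e.1.1, e.1.2), e.2⟩,
        fun e e' h => φ.hom.monotone (Prod.le_def.mpr ⟨(PbC.le_def h).1, (PbC.le_def h).2⟩),
        fun e => hmeet ⟨(e.1.1, e.1.2), e.2⟩ (pbVal hm f Chat e)
          (pbVal_spec hm f Chat e).2.1 (pbVal_spec hm f Chat e).1⟩
    let isoInv : D.left ⟶ ordPb hm f Chat :=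
      ⟨fun d => ⟨((ψ d).1.1, (ψ d).1.2), (ψ d).2⟩,
        fun d d' h => PbC.le_mk (ψ.hom.monotone h).1 (ψ.hom.monotone h).2,
        fun d => by
          refine (pbVal_spec hm f Chat _).2.2 _ ?_ ?_
          · have := hgen (ψ d)
            rw [hψφ d] at this
            exact this
          · have := hγA (ψ d)
            rw [hψφ d] at this
            exact this⟩
    have hOrdIso1 : isoHom ≫ isoInv = 𝟙 (ordPb hm f Chat) := by
      apply OrdCommaHom.ext; funext e
      exact Subtype.ext (congrArg Subtype.val (hφψ ⟨(e.1.1, e.1.2), e.2⟩))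
    have hOrdIso2 : isoInv ≫ isoHom = 𝟙 D.left := by
      apply OrdCommaHom.ext; funext d
      exact hψφ d
    let overIso : (ordR hm f).obj Chat ≅ D :=
      Over.isoMk ⟨isoHom, isoInv, hOrdIso1, hOrdIso2⟩
        (by apply OrdCommaHom.ext; funext e; exact hqφ ⟨(e.1.1, e.1.2), e.2⟩)
    refine ⟨Chat, ⟨Monad.Algebra.isoMk overIso ?_⟩⟩
    apply Over.OverMorphism.ext; apply OrdCommaHom.ext; funext z
    have h3 := (congrArg (OrdCommaHom.toFun f) (hqφ ⟨(z.1.1.1.1, z.1.1.1.2), z.1.1.2⟩)).trans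
      (z.2 : OrdCommaHom.toFun f z.1.1.1.2 = OrdCommaHom.toFun f z.1.2)
    exact hxiφ ⟨(z.1.1.1.1, z.1.1.1.2), z.1.1.2⟩ z.1.2 z.2 h3 (z.1.1.2.trans z.2)
  -- Step 5: conclude.
  haveI : (Monad.comparison (ordAdj hm f)).IsEquivalence := { }
  exact transfer_isEquivalence (ordAdj hm f) (Over.mapPullbackAdj f)

end Desc
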